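/- For the vector X of the previous construction (X_1 = min(V_1,V_2), X_2 = min(V_2,V_3), X_3 = min(V_3,V_4) with V_i i.i.d. unit Pareto) and the partition I_1 = {1,2}, I_2 = {3}: the fragility index FI(X,𝒟) = lim_{x→∞} [P(X_1>x or X_2>x) + P(X_3>x)] / P(X_1>x or X_2>x or X_3>x) = 1, while the coefficient η(X,𝒟) = (1/2) lim_{x→∞} [log P(X_1>x,X_2>x) + log P(X_3>x)] / log P(X_1>x,X_2>x,X_3>x) = 5/8 and η_{(I_1,I_2)} = (1/2) lim_{x→∞} [log P(X_{I_1} ⊀ x) + log P(X_3>x)] / log P(X_{I_1} ⊀ x, X_3>x) = 2/3; in particular the two asymptotic-independence coefficients differ. -/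

import Mathlib

open MeasureTheory ProbabilityTheory Filter Topology

lemma pareto_key {Ω : Type*} [MeasurableSpace Ω] (μ : Measure Ω) [IsProbabilityMeasure μ]
    (V : Fin 4 → Ω → ℝ) (hmeas : ∀ i, Measurable (V i))
    (hindep : iIndepFun V μ)
    (hsurv : ∀ i, ∀ x : ℝ, 1 ≤ x → μ {ω | x < V i ω} = ENNReal.ofReal x⁻¹)
    {x : ℝ} (hx : 1 ≤ x) :
    (μ {ω | x < min (V 0 ω) (V 1 ω) ∨ x < min (V 1 ω) (V 2 ω)}).toReal
        = 2 * x⁻¹ ^ 2 - x⁻¹ ^ 3 ∧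
    (μ {ω | x < min (V 2 ω) (V 3 ω)}).toReal = x⁻¹ ^ 2 ∧
    (μ {ω | x < min (V 0 ω) (V 1 ω) ∨ x < min (V 1 ω) (V 2 ω) ∨ x < min (V 2 ω) (V 3 ω)}).toReal
        = 3 * x⁻¹ ^ 2 - 2 * x⁻¹ ^ 3 ∧
    (μ {ω | x < min (V 0 ω) (V 1 ω) ∧ x < min (V 1 ω) (V 2 ω)}).toReal = x⁻¹ ^ 3 ∧
    (μ {ω | x < min (V 0 ω) (V 1 ω) ∧ x < min (V 1 ω) (V 2 ω) ∧ x < min (V 2 ω) (V 3 ω)}).toReal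
        = x⁻¹ ^ 4 ∧
    (μ {ω | (x < min (V 0 ω) (V 1 ω) ∨ x < min (V 1 ω) (V 2 ω)) ∧ x < min (V 2 ω) (V 3 ω)}).toReal
        = x⁻¹ ^ 3 := by
  have hp : (0:ℝ) ≤ x⁻¹ := by positivity
  have hkey : ∀ S : Finset (Fin 4),
      μ (⋂ i ∈ S, {ω | x < V i ω}) = ENNReal.ofReal x⁻¹ ^ S.card := by
    intro S
    rw [hindep.meas_biInter (s := fun i => {ω | x < V i ω})
      (fun i _ => ⟨Set.Ioi x, measurableSet_Ioi, rfl⟩)]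
    simp [hsurv _ _ hx, Finset.prod_const]
  set E : Fin 4 → Set Ω := fun i => {ω | x < V i ω} with hE
  have hEm : ∀ i, MeasurableSet (E i) := fun i => measurableSet_lt measurable_const (hmeas i)
  -- intersections
  have h01 : μ (E 0 ∩ E 1) = ENNReal.ofReal x⁻¹ ^ 2 := by
    simpa [Finset.set_biInter_insert] using hkey {0, 1}
  have h12 : μ (E 1 ∩ E 2) = ENNReal.ofReal x⁻¹ ^ 2 := by
    simpa [Finset.set_biInter_insert] using hkey {1, 2}
  have h23 : μ (E 2 ∩ E 3) = ENNReal.ofReal x⁻¹ ^ 2 := by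
    simpa [Finset.set_biInter_insert] using hkey {2, 3}
  have h012 : μ (E 0 ∩ (E 1 ∩ E 2)) = ENNReal.ofReal x⁻¹ ^ 3 := by
    simpa [Finset.set_biInter_insert, Set.inter_assoc] using hkey {0, 1, 2}
  have h123 : μ (E 1 ∩ (E 2 ∩ E 3)) = ENNReal.ofReal x⁻¹ ^ 3 := by
    simpa [Finset.set_biInter_insert, Set.inter_assoc] using hkey {1, 2, 3}
  have h0123 : μ (E 0 ∩ (E 1 ∩ (E 2 ∩ E 3))) = ENNReal.ofReal x⁻¹ ^ 4 := by
    simpa [Finset.set_biInter_insert, Set.inter_assoc] using hkey {0, 1, 2, 3}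
  have htr : ∀ n : ℕ, (ENNReal.ofReal x⁻¹ ^ n).toReal = x⁻¹ ^ n := by
    intro n; rw [ENNReal.toReal_pow, ENNReal.toReal_ofReal hp]
  -- set identities
  have sA : {ω | x < min (V 0 ω) (V 1 ω) ∨ x < min (V 1 ω) (V 2 ω)}
      = (E 0 ∩ E 1) ∪ (E 1 ∩ E 2) := by
    ext ω; simp [hE, lt_min_iff, Set.mem_inter_iff, Set.mem_union]
  have sC : {ω | x < min (V 2 ω) (V 3 ω)} = E 2 ∩ E 3 := by
    ext ω; simp [hE, lt_min_iff, Set.mem_inter_iff]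
  have sAB : (E 0 ∩ E 1) ∩ (E 1 ∩ E 2) = E 0 ∩ (E 1 ∩ E 2) := by
    ext ω; simp [Set.mem_inter_iff]; tauto
  have sAC : ((E 0 ∩ E 1) ∪ (E 1 ∩ E 2)) ∩ (E 2 ∩ E 3) = E 1 ∩ (E 2 ∩ E 3) := by
    ext ω; simp [Set.mem_inter_iff, Set.mem_union, hE, Set.mem_setOf_eq]; tauto
  have sU : {ω | x < min (V 0 ω) (V 1 ω) ∨ x < min (V 1 ω) (V 2 ω) ∨ x < min (V 2 ω) (V 3 ω)}
      = ((E 0 ∩ E 1) ∪ (E 1 ∩ E 2)) ∪ (E 2 ∩ E 3) := by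
    ext ω; simp [hE, lt_min_iff, Set.mem_inter_iff, Set.mem_union]; tauto
  have sI2 : {ω | x < min (V 0 ω) (V 1 ω) ∧ x < min (V 1 ω) (V 2 ω)} = E 0 ∩ (E 1 ∩ E 2) := by
    ext ω; simp [hE, lt_min_iff, Set.mem_inter_iff]; tauto
  have sI3 : {ω | x < min (V 0 ω) (V 1 ω) ∧ x < min (V 1 ω) (V 2 ω) ∧ x < min (V 2 ω) (V 3 ω)}
      = E 0 ∩ (E 1 ∩ (E 2 ∩ E 3)) := by
    ext ω; simp [hE, lt_min_iff, Set.mem_inter_iff]; tauto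
  have sM : {ω | (x < min (V 0 ω) (V 1 ω) ∨ x < min (V 1 ω) (V 2 ω)) ∧ x < min (V 2 ω) (V 3 ω)}
      = E 1 ∩ (E 2 ∩ E 3) := by
    ext ω; simp [hE, lt_min_iff, Set.mem_inter_iff]; tauto
  -- union measures via inclusion-exclusion
  have hAunion : (μ ((E 0 ∩ E 1) ∪ (E 1 ∩ E 2))).toReal = 2 * x⁻¹ ^ 2 - x⁻¹ ^ 3 := by
    have h := measure_union_add_inter (μ := μ) (E 0 ∩ E 1) ((hEm 1).inter (hEm 2))
    rw [sAB, h012, h01, h12] at h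
    have h' := congrArg ENNReal.toReal h
    rw [ENNReal.toReal_add (measure_ne_top μ _) (by simp [ENNReal.pow_ne_top]),
      ENNReal.toReal_add (by simp [ENNReal.pow_ne_top]) (by simp [ENNReal.pow_ne_top])] at h'
    simp only [ENNReal.toReal_pow, ENNReal.toReal_ofReal hp] at h'
    linarith
  have hUnion : (μ (((E 0 ∩ E 1) ∪ (E 1 ∩ E 2)) ∪ (E 2 ∩ E 3))).toReal
      = 3 * x⁻¹ ^ 2 - 2 * x⁻¹ ^ 3 := by
    have h := measure_union_add_inter (μ := μ) ((E 0 ∩ E 1) ∪ (E 1 ∩ E 2))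
      ((hEm 2).inter (hEm 3))
    rw [sAC, h123, h23] at h
    have h' := congrArg ENNReal.toReal h
    rw [ENNReal.toReal_add (measure_ne_top μ _) (by simp [ENNReal.pow_ne_top]),
      ENNReal.toReal_add (measure_ne_top μ _) (by simp [ENNReal.pow_ne_top])] at h'
    simp only [ENNReal.toReal_pow, ENNReal.toReal_ofReal hp] at h'
    rw [hAunion] at h'
    linarith
  refine ⟨by rw [sA, hAunion], by rw [sC, h23, htr], by rw [sU, hUnion],
    by rw [sI2, h012, htr], by rw [sI3, h0123, htr], by rw [sM, h123, htr]⟩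

/-- For `X₁ = V₁∧V₂`, `X₂ = V₂∧V₃`, `X₃ = V₃∧V₄` with `V₁,...,V₄` i.i.d. unit
Pareto and the partition `I₁ = {1,2}`, `I₂ = {3}`: the fragility index equals 1,
while `η(X,𝒟) = 5/8` and `η_{(I₁,I₂)} = 2/3`. -/
theorem pareto_min_fragility_and_eta
    {Ω : Type*} [MeasurableSpace Ω] (μ : Measure Ω) [IsProbabilityMeasure μ]
    (V : Fin 4 → Ω → ℝ) (hmeas : ∀ i, Measurable (V i))
    (hindep : iIndepFun V μ)
    (hsurv : ∀ i, ∀ x : ℝ, 1 ≤ x → μ {ω | x < V i ω} = ENNReal.ofReal x⁻¹)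
    (X₁ X₂ X₃ : Ω → ℝ)
    (hX₁ : X₁ = fun ω => min (V 0 ω) (V 1 ω))
    (hX₂ : X₂ = fun ω => min (V 1 ω) (V 2 ω))
    (hX₃ : X₃ = fun ω => min (V 2 ω) (V 3 ω)) :
    Tendsto (fun x : ℝ =>
        ((μ {ω | x < X₁ ω ∨ x < X₂ ω}).toReal + (μ {ω | x < X₃ ω}).toReal) /
          (μ {ω | x < X₁ ω ∨ x < X₂ ω ∨ x < X₃ ω}).toReal)
      atTop (𝓝 1) ∧
    Tendsto (fun x : ℝ =>
        (1 / 2) * ((Real.log (μ {ω | x < X₁ ω ∧ x < X₂ ω}).toReal +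
            Real.log (μ {ω | x < X₃ ω}).toReal) /
          Real.log (μ {ω | x < X₁ ω ∧ x < X₂ ω ∧ x < X₃ ω}).toReal))
      atTop (𝓝 (5 / 8)) ∧
    Tendsto (fun x : ℝ =>
        (1 / 2) * ((Real.log (μ {ω | x < X₁ ω ∨ x < X₂ ω}).toReal +
            Real.log (μ {ω | x < X₃ ω}).toReal) /
          Real.log (μ {ω | (x < X₁ ω ∨ x < X₂ ω) ∧ x < X₃ ω}).toReal))
      atTop (𝓝 (2 / 3)) := by
  subst hX₁ hX₂ hX₃
  have key := fun (x : ℝ) (hx : 1 ≤ x) => pareto_key μ V hmeas hindep hsurv hx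
  refine ⟨?_, ?_, ?_⟩
  · -- fragility index = 1
    have hg : Tendsto (fun x : ℝ => (3 - x⁻¹) / (3 - 2 * x⁻¹)) atTop (𝓝 1) := by
      have h0 : Tendsto (fun x : ℝ => x⁻¹) atTop (𝓝 (0:ℝ)) := tendsto_inv_atTop_zero
      have h1 : Tendsto (fun x : ℝ => (3:ℝ) - x⁻¹) atTop (𝓝 (3 - 0)) :=
        tendsto_const_nhds.sub h0
      have h2 : Tendsto (fun x : ℝ => (3:ℝ) - 2 * x⁻¹) atTop (𝓝 (3 - 2 * 0)) :=
        tendsto_const_nhds.sub (h0.const_mul 2)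
      have h3 := h1.div h2 (by norm_num)
      norm_num at h3
      exact h3
    refine hg.congr' ?_
    filter_upwards [eventually_gt_atTop 1] with x hx
    obtain ⟨hA, hC, hU, -, -, -⟩ := key x hx.le
    have hxpos : (0:ℝ) < x⁻¹ := by positivity
    rw [hA, hC, hU]
    have hnum : 2 * x⁻¹ ^ 2 - x⁻¹ ^ 3 + x⁻¹ ^ 2 = x⁻¹ ^ 2 * (3 - x⁻¹) := by ring
    have hden : 3 * x⁻¹ ^ 2 - 2 * x⁻¹ ^ 3 = x⁻¹ ^ 2 * (3 - 2 * x⁻¹) := by ring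
    rw [hnum, hden, mul_div_mul_left _ _ (by positivity)]
  · -- η = 5/8 : eventually constant
    refine tendsto_const_nhds.congr' ?_
    filter_upwards [eventually_gt_atTop 1] with x hx
    obtain ⟨-, hC, -, hI2, hI3, -⟩ := key x hx.le
    have hL : Real.log x⁻¹ ≠ 0 := by
      rw [Real.log_inv]
      exact neg_ne_zero.mpr (ne_of_gt (Real.log_pos hx))
    rw [hC, hI2, hI3]
    simp only [Real.log_pow]
    push_cast
    have h4 : (4:ℝ) * Real.log x⁻¹ ≠ 0 := mul_ne_zero (by norm_num) hL
    rw [show (3:ℝ) * Real.log x⁻¹ + 2 * Real.log x⁻¹ = (5/4) * (4 * Real.log x⁻¹) by ring,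
      mul_div_assoc, div_self h4]
    norm_num
  · -- η_{(I₁,I₂)} = 2/3
    have h2 : Tendsto (fun x : ℝ => Real.log (2 - x⁻¹)) atTop (𝓝 (Real.log 2)) := by
      have h0 : Tendsto (fun x : ℝ => 2 - x⁻¹) atTop (𝓝 2) := by
        have h0' : Tendsto (fun x : ℝ => x⁻¹) atTop (𝓝 (0:ℝ)) := tendsto_inv_atTop_zero
        simpa using tendsto_const_nhds.sub h0'
      exact ((Real.continuousAt_log (by norm_num)).tendsto.comp h0)
    have hdiv : Tendsto (fun x : ℝ => Real.log (2 - x⁻¹) / Real.log x) atTop (𝓝 0) :=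
      h2.div_atTop Real.tendsto_log_atTop
    have hg : Tendsto (fun x : ℝ => (1/2) * ((4 - Real.log (2 - x⁻¹) / Real.log x) / 3))
        atTop (𝓝 (2/3)) := by
      have h4 : Tendsto (fun x : ℝ => (4:ℝ) - Real.log (2 - x⁻¹) / Real.log x)
          atTop (𝓝 (4 - 0)) := tendsto_const_nhds.sub hdiv
      have h5 := (h4.div_const (3:ℝ)).const_mul (1/2 : ℝ)
      norm_num at h5
      exact h5
    refine hg.congr' ?_
    filter_upwards [eventually_gt_atTop 1] with x hx
    obtain ⟨hA, hC, -, -, -, hM⟩ := key x hx.le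
    have hx0 : (0:ℝ) < x := lt_trans one_pos hx
    have hxi : (0:ℝ) < x⁻¹ := by positivity
    have hxi1 : x⁻¹ < 1 := by
      rw [inv_lt_one_iff₀]; right; exact hx
    have hLx : Real.log x ≠ 0 := ne_of_gt (Real.log_pos hx)
    rw [hA, hC, hM]
    have hfac : 2 * x⁻¹ ^ 2 - x⁻¹ ^ 3 = x⁻¹ ^ 2 * (2 - x⁻¹) := by ring
    have h2pos : (0:ℝ) < 2 - x⁻¹ := by linarith
    rw [hfac, Real.log_mul (by positivity) (ne_of_gt h2pos)]
    simp only [Real.log_pow, Real.log_inv]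
    field_simp
    ring
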